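/- Let G be a 3-uniform hypergraph on n vertices such that for every vertex v the link graph L(v) is a split graph. Then there exists U ⊆ V(G) with |U| ≥ n^{1/3} and a graph F on U such that for all distinct x, y, z ∈ U: {x,y,z} ∈ E(G) if and only if F has at least 2 edges among the pairs xy, xz, yz. -/

import Mathlib

open Finset

/-- An `ℓ`-uniform hypergraph (given by its edge set `E`) is disperse if every
`(ℓ+1)`-set of vertices induces `0`, `1`, `ℓ` or `ℓ+1` edges. -/
def Disperse {V : Type*} [DecidableEq V] (ℓ : ℕ) (E : Finset (Finset V)) : Prop :=
  ∀ X : Finset V, X.card = ℓ + 1 →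
    (E.filter (· ⊆ X)).card = 0 ∨ (E.filter (· ⊆ X)).card = 1 ∨
    (E.filter (· ⊆ X)).card = ℓ ∨ (E.filter (· ⊆ X)).card = ℓ + 1

/-- Edge set of the link of a vertex `v`: all `(ℓ-1)`-sets `e` with `e ∪ {v} ∈ E`. -/
def linkEdges {V : Type*} [DecidableEq V] (E : Finset (Finset V)) (v : V) :
    Finset (Finset V) :=
  (E.filter (fun e => v ∈ e)).image (fun e => e.erase v)

/-- `A` and `B` are connected by a tight walk in the `k`-uniform hypergraph with
edge set `E`: there is a sequence of edges, consecutive ones sharing at least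
`k - 1` vertices, whose first edge contains `A` and last edge contains `B`. -/
def TightConn {V : Type*} [DecidableEq V] (k : ℕ) (E : Finset (Finset V))
    (A B : Finset V) : Prop :=
  ∃ es : List (Finset V), ∃ h : es ≠ [],
    (∀ e ∈ es, e ∈ E) ∧ es.Chain' (fun a b => k - 1 ≤ (a ∩ b).card) ∧
    A ⊆ es.head h ∧ B ⊆ es.getLast h

set_option linter.unusedSectionVars false
set_option linter.unusedVariables false

open Finset

section SplitAux

variable {V : Type*} [DecidableEq V] [Fintype V]

private lemma triple_rot (a b c : V) : ({a, b, c} : Finset V) = {b, c, a} := by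
  ext t; simp only [mem_insert, mem_singleton]; tauto

private lemma triple_swap12 (a b c : V) : ({a, b, c} : Finset V) = {b, a, c} := by
  ext t; simp only [mem_insert, mem_singleton]; tauto

structure SplitData (E : Finset (Finset V)) (K I : V → Finset V) : Prop where
  hu : ∀ v, K v ∪ I v = Finset.univ.erase v
  hd : ∀ v, Disjoint (K v) (I v)
  hK : ∀ v, ∀ x ∈ K v, ∀ y ∈ K v, x ≠ y → ({v, x, y} : Finset V) ∈ E
  hI : ∀ v, ∀ x ∈ I v, ∀ y ∈ I v, x ≠ y → ({v, x, y} : Finset V) ∉ E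

variable {E : Finset (Finset V)} {K I : V → Finset V}

lemma SplitData.memK_ne (hs : SplitData E K I) {v x : V} (h : x ∈ K v) : x ≠ v := by
  have : x ∈ K v ∪ I v := mem_union_left _ h
  rw [hs.hu v] at this
  exact (mem_erase.mp this).1

lemma SplitData.memI_ne (hs : SplitData E K I) {v x : V} (h : x ∈ I v) : x ≠ v := by
  have : x ∈ K v ∪ I v := mem_union_right _ h
  rw [hs.hu v] at this
  exact (mem_erase.mp this).1

lemma SplitData.notK_memI (hs : SplitData E K I) {v x : V} (hne : x ≠ v)
    (h : x ∉ K v) : x ∈ I v := by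
  have : x ∈ K v ∪ I v := by
    rw [hs.hu v]; exact mem_erase.mpr ⟨hne, mem_univ x⟩
  rcases mem_union.mp this with h' | h'
  · exact absurd h' h
  · exact h'

lemma SplitData.outInd (hs : SplitData E K I) {v a b : V}
    (ha : a ∈ K v) (hva : v ∉ K a) (hb : b ∈ K v) (hvb : v ∉ K b)
    (hab : a ≠ b) : b ∈ K a := by
  by_contra hba
  have hav : a ≠ v := hs.memK_ne ha
  have hbv : b ≠ v := hs.memK_ne hb
  have hbIa : b ∈ I a := hs.notK_memI hab.symm hba
  have hvIa : v ∈ I a := hs.notK_memI hav.symm hva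
  have hE : ({v, a, b} : Finset V) ∈ E := hs.hK v a ha b hb hab
  have hNE : ({a, b, v} : Finset V) ∉ E := hs.hI a b hbIa v hvIa hbv
  rw [triple_rot] at hE
  exact hNE hE

lemma SplitData.inInd (hs : SplitData E K I) {v a b : V}
    (ha : a ∈ I v) (hva : v ∈ K a) (hb : b ∈ I v) (hvb : v ∈ K b)
    (hab : a ≠ b) : b ∉ K a := by
  intro hba
  have hbv : b ≠ v := hs.memI_ne hb
  have hE : ({a, v, b} : Finset V) ∈ E := hs.hK a v hva b hba hbv.symm
  have hNE : ({v, a, b} : Finset V) ∉ E := hs.hI v a ha b hb hab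
  rw [triple_swap12] at hE
  exact hNE hE

/-- Bad pair: the two "split directions" disagree. -/
def BadPair (K : V → Finset V) (x y : V) : Prop :=
  x ≠ y ∧ ¬ (y ∈ K x ↔ x ∈ K y)

lemma badPair_symm {K : V → Finset V} {x y : V} (h : BadPair K x y) : BadPair K y x :=
  ⟨h.1.symm, fun hi => h.2 hi.symm⟩

lemma badPair_or {K : V → Finset V} {x y : V} (h : BadPair K x y) :
    (y ∈ K x ∧ x ∉ K y) ∨ (x ∈ K y ∧ y ∉ K x) := by
  rcases h with ⟨hne, hniff⟩
  by_cases h1 : y ∈ K x <;> by_cases h2 : x ∈ K y <;> tauto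

lemma SplitData.k4aux (hs : SplitData E K I) {a b c d : V}
    (hbc : b ≠ c) (hbd : b ≠ d) (hcd : c ≠ d)
    (hDab : b ∈ K a ∧ a ∉ K b)
    (Bac : BadPair K a c) (Bad' : BadPair K a d)
    (Bbc : BadPair K b c) (Bbd : BadPair K b d) (Bcd : BadPair K c d) : False := by
  have hca : a ∈ K c ∧ c ∉ K a := by
    rcases badPair_or Bac with h | h
    · exfalso
      have h1 : c ∈ K b := hs.outInd hDab.1 hDab.2 h.1 h.2 hbc
      have h2 : b ∈ K c := hs.outInd h.1 h.2 hDab.1 hDab.2 hbc.symm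
      exact Bbc.2 (iff_of_true h1 h2)
    · exact h
  have hda : a ∈ K d ∧ d ∉ K a := by
    rcases badPair_or Bad' with h | h
    · exfalso
      have h1 : d ∈ K b := hs.outInd hDab.1 hDab.2 h.1 h.2 hbd
      have h2 : b ∈ K d := hs.outInd h.1 h.2 hDab.1 hDab.2 hbd.symm
      exact Bbd.2 (iff_of_true h1 h2)
    · exact h
  have hcIa : c ∈ I a := hs.notK_memI Bac.1.symm hca.2
  have hdIa : d ∈ I a := hs.notK_memI Bad'.1.symm hda.2
  have h1 : d ∉ K c := hs.inInd hcIa hca.1 hdIa hda.1 hcd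
  have h2 : c ∉ K d := hs.inInd hdIa hda.1 hcIa hca.1 hcd.symm
  exact Bcd.2 (iff_of_false h1 h2)

lemma SplitData.k4 (hs : SplitData E K I) {a b c d : V}
    (hbc : b ≠ c) (hbd : b ≠ d) (hcd : c ≠ d)
    (Bab : BadPair K a b) (Bac : BadPair K a c) (Bad' : BadPair K a d)
    (Bbc : BadPair K b c) (Bbd : BadPair K b d) (Bcd : BadPair K c d) : False := by
  rcases badPair_or Bab with h | h
  · exact hs.k4aux hbc hbd hcd h Bac Bad' Bbc Bbd Bcd
  · exact hs.k4aux Bac.1 Bad'.1 hcd h Bbc Bbd Bac Bad' Bcd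

lemma SplitData.goodOfNot (hs : SplitData E K I) {v a : V} (hne : a ≠ v)
    (h1 : a ∉ (K v).filter (fun y => v ∉ K y))
    (h2 : a ∉ (I v).filter (fun y => v ∈ K y)) : (a ∈ K v ↔ v ∈ K a) := by
  constructor
  · intro h; by_contra hv; exact h1 (mem_filter.mpr ⟨h, hv⟩)
  · intro h; by_contra hv; exact h2 (mem_filter.mpr ⟨hs.notK_memI hne hv, h⟩)

lemma badPair_mem (hs : SplitData E K I) {v y : V} (h : BadPair K v y) :
    y ∈ (K v).filter (fun z => v ∉ K z) ∪ (I v).filter (fun z => v ∈ K z) := by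
  obtain ⟨hne, hniff⟩ := h
  by_cases h1 : y ∈ K v <;> by_cases h2 : v ∈ K y
  · exact absurd (iff_of_true h1 h2) hniff
  · exact mem_union_left _ (mem_filter.mpr ⟨h1, h2⟩)
  · exact mem_union_right _ (mem_filter.mpr ⟨hs.notK_memI hne.symm h1, h2⟩)
  · exact absurd (iff_of_false h1 h2) hniff

/-- greedy independent set -/
lemma greedy_indep {W : Type*} [DecidableEq W] (R : W → W → Prop)
    (hsym : ∀ x y, R x y → R y x) (hirr : ∀ x, ¬ R x x) (d : ℕ)
    (hdeg : ∀ v : W, ∃ Sv : Finset W, (∀ y, R v y → y ∈ Sv) ∧ Sv.card ≤ d) :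
    ∀ S : Finset W, ∃ T ⊆ S, (∀ x ∈ T, ∀ y ∈ T, ¬ R x y) ∧
      S.card ≤ (d + 1) * T.card := by
  classical
  intro S
  induction S using Finset.strongInduction with
  | _ S ih =>
    rcases S.eq_empty_or_nonempty with rfl | ⟨v, hv⟩
    · exact ⟨∅, Finset.Subset.refl _, by simp, by simp⟩
    · obtain ⟨Sv, hSv, hSvcard⟩ := hdeg v
      set S' := S.filter (fun y => ¬ R v y ∧ y ≠ v) with hS'def
      have hvS' : v ∉ S' := by simp [hS'def]
      have hsub : S' ⊆ S := filter_subset _ _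
      have hss : S' ⊂ S := by
        refine Finset.ssubset_iff_of_subset hsub |>.mpr ⟨v, hv, hvS'⟩
      obtain ⟨T, hT1, hT2, hT3⟩ := ih S' hss
      have hvT : v ∉ T := fun h => hvS' (hT1 h)
      refine ⟨insert v T, insert_subset hv (hT1.trans hsub), ?_, ?_⟩
      · intro x hx y hy
        rcases mem_insert.mp hx with rfl | hx' <;> rcases mem_insert.mp hy with rfl | hy'
        · exact hirr _
        · exact (mem_filter.mp (hT1 hy')).2.1
        · intro h; exact (mem_filter.mp (hT1 hx')).2.1 (hsym _ _ h)
        · exact hT2 x hx' y hy'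
      · have hcover : S ⊆ S' ∪ insert v Sv := by
          intro y hy
          by_cases h1 : R v y
          · exact mem_union_right _ (mem_insert_of_mem (hSv y h1))
          · by_cases h2 : y = v
            · exact mem_union_right _ (by simp [h2])
            · exact mem_union_left _ (mem_filter.mpr ⟨hy, h1, h2⟩)
        have hc1 := card_le_card hcover
        have hc2 := card_union_le S' (insert v Sv)
        have hc3 := card_insert_le v Sv
        have hTcard : (insert v T).card = T.card + 1 := card_insert_of_notMem hvT
        have hstep : S.card ≤ S'.card + (d + 1) := by omega
        have : (d + 1) * (T.card + 1) = (d + 1) * T.card + (d + 1) := by ring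
        rw [hTcard, this]
        omega

lemma cube_root_le {n m k : ℕ} (h : n ≤ m ^ 3) (h2 : m ≤ k) :
    (n : ℝ) ^ ((1 : ℝ) / 3) ≤ (k : ℕ) := by
  have h0 : (n : ℝ) ≤ ((m : ℝ)) ^ (3 : ℕ) := by exact_mod_cast h
  have h1 : (n : ℝ) ^ ((1 : ℝ) / 3) ≤ ((m : ℝ) ^ (3 : ℕ)) ^ ((1 : ℝ) / 3) :=
    Real.rpow_le_rpow (by positivity) h0 (by norm_num)
  have h3 : ((m : ℝ) ^ (3 : ℕ)) ^ ((1 : ℝ) / 3) = (m : ℝ) := by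
    rw [← Real.rpow_natCast (m : ℝ) 3, ← Real.rpow_mul (Nat.cast_nonneg m)]
    norm_num
  rw [h3] at h1
  exact h1.trans (by exact_mod_cast h2)

lemma SplitData.buildF (hs : SplitData E K I) (U : Finset V)
    (hg : ∀ x ∈ U, ∀ y ∈ U, x ≠ y → (y ∈ K x ↔ x ∈ K y)) :
    ∃ F : V → V → Bool, (∀ x y, F x y = F y x) ∧ (∀ x, F x x = false) ∧
      ∀ x ∈ U, ∀ y ∈ U, ∀ z ∈ U, x ≠ y → x ≠ z → y ≠ z →
        (({x, y, z} : Finset V) ∈ E ↔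
          2 ≤ (if F x y then 1 else 0) + (if F x z then 1 else 0) +
              (if F y z then 1 else 0)) := by
  refine ⟨fun x y => decide (x ≠ y ∧ y ∈ K x ∧ x ∈ K y), ?_, ?_, ?_⟩
  · intro x y
    simp only [decide_eq_decide]
    constructor <;> rintro ⟨h1, h2, h3⟩ <;> exact ⟨h1.symm, h3, h2⟩
  · intro x; simp
  · intro x hx y hy z hz hxy hxz hyz
    have gxy := hg x hx y hy hxy
    have gxz := hg x hx z hz hxz
    have gyz := hg y hy z hz hyz
    have exy : (x ≠ y ∧ y ∈ K x ∧ x ∈ K y) ↔ y ∈ K x :=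
      ⟨fun h => h.2.1, fun h => ⟨hxy, h, gxy.mp h⟩⟩
    have exz : (x ≠ z ∧ z ∈ K x ∧ x ∈ K z) ↔ z ∈ K x :=
      ⟨fun h => h.2.1, fun h => ⟨hxz, h, gxz.mp h⟩⟩
    have eyz : (y ≠ z ∧ z ∈ K y ∧ y ∈ K z) ↔ z ∈ K y :=
      ⟨fun h => h.2.1, fun h => ⟨hyz, h, gyz.mp h⟩⟩
    simp only [decide_eq_true_eq, exy, exz, eyz]
    by_cases hA : y ∈ K x <;> by_cases hB : z ∈ K x <;> by_cases hC : z ∈ K y <;>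
      simp only [if_pos, if_neg, hA, hB, hC, if_true, if_false, not_false_iff]
    · exact iff_of_true (hs.hK x y hA z hB hyz) (by norm_num)
    · exact iff_of_true (hs.hK x y hA z hB hyz) (by norm_num)
    · refine iff_of_true ?_ (by norm_num)
      rw [triple_swap12]
      exact hs.hK y x (gxy.mp hA) z hC hxz
    · refine iff_of_false ?_ (by norm_num)
      rw [show ({x, y, z} : Finset V) = {z, x, y} from (triple_rot x y z).trans (triple_rot y z x)]
      have h1 : x ∈ I z := hs.notK_memI hxz (fun h => hB (gxz.mpr h))
      have h2 : y ∈ I z := hs.notK_memI hyz (fun h => hC (gyz.mpr h))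
      exact hs.hI z x h1 y h2 hxy
    · refine iff_of_true ?_ (by norm_num)
      rw [show ({x, y, z} : Finset V) = {z, x, y} from (triple_rot x y z).trans (triple_rot y z x)]
      exact hs.hK z x (gxz.mp hB) y (gyz.mp hC) hxy
    · refine iff_of_false ?_ (by norm_num)
      rw [triple_swap12]
      have h1 : x ∈ I y := hs.notK_memI hxy (fun h => hA (gxy.mpr h))
      have h2 : z ∈ I y := hs.notK_memI hyz.symm hC
      exact hs.hI y x h1 z h2 hxz
    · refine iff_of_false ?_ (by norm_num)
      have h1 : y ∈ I x := hs.notK_memI hxy.symm hA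
      have h2 : z ∈ I x := hs.notK_memI hxz.symm hB
      exact hs.hI x y h1 z h2 hyz
    · refine iff_of_false ?_ (by norm_num)
      have h1 : y ∈ I x := hs.notK_memI hxy.symm hA
      have h2 : z ∈ I x := hs.notK_memI hxz.symm hB
      exact hs.hI x y h1 z h2 hyz

end SplitAux

/-- 3-graphs with split links contain a large set realizing the
majority-of-a-graph construction. -/
theorem split_links_structure {V : Type*} [DecidableEq V] [Fintype V]
    (E : Finset (Finset V)) (hunif : ∀ e ∈ E, e.card = 3)
    (hsplit : ∀ v : V, ∃ K I : Finset V,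
      K ∪ I = Finset.univ.erase v ∧ Disjoint K I ∧
      (∀ x ∈ K, ∀ y ∈ K, x ≠ y → ({v, x, y} : Finset V) ∈ E) ∧
      (∀ x ∈ I, ∀ y ∈ I, x ≠ y → ({v, x, y} : Finset V) ∉ E)) :
    ∃ U : Finset V, (Fintype.card V : ℝ) ^ ((1 : ℝ) / 3) ≤ U.card ∧
      ∃ F : V → V → Bool, (∀ x y, F x y = F y x) ∧ (∀ x, F x x = false) ∧
        ∀ x ∈ U, ∀ y ∈ U, ∀ z ∈ U, x ≠ y → x ≠ z → y ≠ z →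
          (({x, y, z} : Finset V) ∈ E ↔
            2 ≤ (if F x y then 1 else 0) + (if F x z then 1 else 0) +
                (if F y z then 1 else 0)) := by
  classical
  choose K I hu hd hKc hIc using hsplit
  have hs : SplitData E K I := ⟨hu, hd, hKc, hIc⟩
  have hex : ∃ k : ℕ, Fintype.card V ≤ k ^ 3 :=
    ⟨Fintype.card V, Nat.le_self_pow (by norm_num) _⟩
  obtain ⟨m, hm, hmin⟩ : ∃ m : ℕ, Fintype.card V ≤ m ^ 3 ∧
      ∀ k < m, ¬ Fintype.card V ≤ k ^ 3 :=
    ⟨Nat.find hex, Nat.find_spec hex, fun k hk => Nat.find_min hex hk⟩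
  by_cases hm2 : m ≤ 2
  · -- trivial small case: any set of m vertices works vacuously
    have hmn : m ≤ Fintype.card V := by
      by_contra hcon
      push_neg at hcon
      exact hmin _ hcon (Nat.le_self_pow (n := 3) (by norm_num) _)
    obtain ⟨U, hUsub, hUcard⟩ := Finset.exists_subset_card_eq (s := (univ : Finset V)) (n := m)
      (by rw [card_univ]; exact hmn)
    refine ⟨U, cube_root_le hm (le_of_eq hUcard.symm), fun _ _ => false,
      fun _ _ => rfl, fun _ => rfl, ?_⟩
    intro x hx y hy z hz hxy hxz hyz
    exfalso
    have hsub : ({x, y, z} : Finset V) ⊆ U := by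
      intro t ht
      simp only [mem_insert, mem_singleton] at ht
      rcases ht with rfl | rfl | rfl <;> assumption
    have h3 : ({x, y, z} : Finset V).card = 3 := by
      rw [card_insert_of_notMem (by simp [hxy, hxz]),
        card_insert_of_notMem (by simp [hyz]), card_singleton]
    have := card_le_card hsub
    omega
  · push_neg at hm2
    by_cases hca : ∃ v, m ≤ ((K v).filter (fun y => v ∉ K y)).card
    · obtain ⟨v, hv⟩ := hca
      refine ⟨_, cube_root_le hm hv, hs.buildF _ ?_⟩
      intro a ha b hb hab
      have ha' := mem_filter.mp ha
      have hb' := mem_filter.mp hb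
      exact iff_of_true (hs.outInd ha'.1 ha'.2 hb'.1 hb'.2 hab)
        (hs.outInd hb'.1 hb'.2 ha'.1 ha'.2 hab.symm)
    · by_cases hcb : ∃ v, m ≤ ((I v).filter (fun y => v ∈ K y)).card
      · obtain ⟨v, hv⟩ := hcb
        refine ⟨_, cube_root_le hm hv, hs.buildF _ ?_⟩
        intro a ha b hb hab
        have ha' := mem_filter.mp ha
        have hb' := mem_filter.mp hb
        exact iff_of_false (hs.inInd ha'.1 ha'.2 hb'.1 hb'.2 hab)
          (hs.inInd hb'.1 hb'.2 ha'.1 ha'.2 hab.symm)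
      · push_neg at hca hcb
        have hdeg : ∀ v : V, ∃ Sv : Finset V,
            (∀ y, BadPair K v y → y ∈ Sv) ∧ Sv.card ≤ (m - 1) + (m - 1) := by
          intro v
          refine ⟨_, fun y hy => badPair_mem hs hy, ?_⟩
          have h1 := hca v
          have h2 := hcb v
          have h3 := card_union_le ((K v).filter (fun z => v ∉ K z))
            ((I v).filter (fun z => v ∈ K z))
          omega
        obtain ⟨T, hTsub, hTind, hTcard⟩ := greedy_indep (BadPair K)
          (fun _ _ h => badPair_symm h) (fun x hx => hx.1 rfl)
          ((m - 1) + (m - 1)) hdeg univ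
        rw [card_univ] at hTcard
        by_cases hTm : m ≤ T.card
        · refine ⟨T, cube_root_le hm hTm, hs.buildF _ ?_⟩
          intro a ha b hb hab
          have h := hTind a ha b hb
          rw [BadPair] at h
          by_contra hniff
          exact h ⟨hab, hniff⟩
        · by_cases hq : m = 3
          · -- special case m = 3, 9 ≤ n ≤ 14
            subst hq
            have hn9 : 9 ≤ Fintype.card V := by
              have := hmin 2 (by omega)
              omega
            obtain ⟨v⟩ : Nonempty V := Fintype.card_pos_iff.mp (by omega)
            set X := ((K v).filter (fun y => v ∉ K y)) ∪
              ((I v).filter (fun y => v ∈ K y)) with hX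
            set Gv := (univ.erase v) \ X with hGvdef
            have hGvcard : 4 ≤ Gv.card := by
              have h1 := hca v
              have h2 := hcb v
              have h3 : X.card ≤ ((K v).filter (fun y => v ∉ K y)).card +
                  ((I v).filter (fun y => v ∈ K y)).card := card_union_le _ _
              have h4 : (univ.erase v).card - X.card ≤ Gv.card :=
                Finset.le_card_sdiff X (univ.erase v)
              have h5 : (univ.erase v).card = Fintype.card V - 1 := by
                rw [card_erase_of_mem (mem_univ v), card_univ]
              omega
            have hGvgood : ∀ a ∈ Gv, a ≠ v ∧ (a ∈ K v ↔ v ∈ K a) := by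
              intro a haG
              have h' := mem_sdiff.mp haG
              have hne : a ≠ v := (mem_erase.mp h'.1).1
              refine ⟨hne, hs.goodOfNot hne ?_ ?_⟩
              · exact fun h => h'.2 (mem_union_left _ h)
              · exact fun h => h'.2 (mem_union_right _ h)
            by_cases hpair : ∃ a ∈ Gv, ∃ b ∈ Gv, a ≠ b ∧ (b ∈ K a ↔ a ∈ K b)
            · obtain ⟨a, haG, b, hbG, hab, hgab⟩ := hpair
              obtain ⟨hav, hga⟩ := hGvgood a haG
              obtain ⟨hbv, hgb⟩ := hGvgood b hbG
              have hcard3 : ({v, a, b} : Finset V).card = 3 := by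
                rw [card_insert_of_notMem, card_insert_of_notMem, card_singleton]
                · simp only [mem_singleton]; exact fun h => hab h
                · simp only [mem_insert, mem_singleton]
                  push_neg
                  exact ⟨fun h => hav h.symm, fun h => hbv h.symm⟩
              refine ⟨{v, a, b}, cube_root_le hm (le_of_eq hcard3.symm),
                hs.buildF _ ?_⟩
              intro x hx y hy hxy
              simp only [mem_insert, mem_singleton] at hx hy
              rcases hx with rfl | rfl | rfl <;> rcases hy with rfl | rfl | rfl
              · exact absurd rfl hxy
              · exact hga
              · exact hgb
              · exact hga.symm
              · exact absurd rfl hxy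
              · exact hgab
              · exact hgb.symm
              · exact hgab.symm
              · exact absurd rfl hxy
            · push_neg at hpair
              exfalso
              have hBad : ∀ x ∈ Gv, ∀ y ∈ Gv, x ≠ y → BadPair K x y := by
                intro x hx y hy hne
                refine ⟨hne, fun hiff => ?_⟩
                have := hpair x hx y hy hne
                tauto
              obtain ⟨S4, hS4sub, hS4card⟩ := Finset.exists_subset_card_eq (s := Gv) (n := 4) hGvcard
              obtain ⟨a, haS⟩ := card_pos.mp (by omega : 0 < S4.card)
              have h3 : (S4.erase a).card = 3 := by
                rw [card_erase_of_mem haS]; omega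
              obtain ⟨b, c, d, hbc, hbd, hcd, heq⟩ := Finset.card_eq_three.mp h3
              have hbS : b ∈ S4.erase a := by rw [heq]; simp
              have hcS : c ∈ S4.erase a := by rw [heq]; simp
              have hdS : d ∈ S4.erase a := by rw [heq]; simp
              have haG : a ∈ Gv := hS4sub haS
              have hbG : b ∈ Gv := hS4sub (mem_of_mem_erase hbS)
              have hcG : c ∈ Gv := hS4sub (mem_of_mem_erase hcS)
              have hdG : d ∈ Gv := hS4sub (mem_of_mem_erase hdS)
              have hab : a ≠ b := ((mem_erase.mp hbS).1).symm
              have hac : a ≠ c := ((mem_erase.mp hcS).1).symm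
              have had : a ≠ d := ((mem_erase.mp hdS).1).symm
              exact hs.k4 hbc hbd hcd (hBad a haG b hbG hab)
                (hBad a haG c hcG hac) (hBad a haG d hdG had)
                (hBad b hbG c hcG hbc) (hBad b hbG d hdG hbd)
                (hBad c hcG d hdG hcd)
          · -- m ≥ 4 : arithmetic contradiction
            exfalso
            obtain ⟨p, rfl⟩ : ∃ p, m = p + 4 := ⟨m - 4, by omega⟩
            have hlow : (p + 3) ^ 3 < Fintype.card V := by
              have := hmin (p + 3) (by omega)
              omega
            have he : p + 4 - 1 = p + 3 := by omega
            rw [he] at hTcard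
            have hT3 : T.card ≤ p + 3 := by omega
            nlinarith [hTcard, hlow, hT3]
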